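/- arXiv:2109.05355 — 5 statements merged into one kernel-verified Lean document; each statement's English description precedes it below -/
import Mathlib

section
/- Let ω, ω', ω'' be complex numbers of modulus 1 with ω·ω'·ω'' = −1. Then |Arg ω| + |Arg ω'| + |Arg ω''| ≥ π, where Arg denotes the principal argument valued in (−π, π]. Moreover, equality holds if and only if either 1 ∈ {ω, ω', ω''}, or the imaginary parts of ω, ω', ω'' are all strictly positive, or all strictly negative. -/
open Real

/-- Core real-arithmetic lemma. -/
lemma core_lemma (a b c : ℝ) (ha1 : -π < a) (ha2 : a ≤ π)
    (hb1 : -π < b) (hb2 : b ≤ π) (hc1 : -π < c) (hc2 : c ≤ π)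
    (n : ℤ) (hn : a + b + c = π + 2 * π * n) :
    π ≤ |a| + |b| + |c| ∧
    (|a| + |b| + |c| = π ↔
      (a = 0 ∨ b = 0 ∨ c = 0) ∨
      (0 < a ∧ a < π ∧ 0 < b ∧ b < π ∧ 0 < c ∧ c < π) ∨
      (a < 0 ∧ b < 0 ∧ c < 0)) := by
  have hπ : 0 < π := Real.pi_pos
  have hn1 : n ≤ 1 := by
    by_contra hh
    push_neg at hh
    have : (2 : ℝ) ≤ (n : ℝ) := by exact_mod_cast hh
    nlinarith
  have hn2 : -1 ≤ n := by
    by_contra hh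
    push_neg at hh
    have h2 : n ≤ -2 := by omega
    have : (n : ℝ) ≤ -2 := by exact_mod_cast h2
    nlinarith
  interval_cases n
  · -- sum = -π
    have hsum : a + b + c = -π := by push_cast at hn; linarith
    have key : |a| + |b| + |c| = π ↔ (a ≤ 0 ∧ b ≤ 0 ∧ c ≤ 0) := by
      constructor
      · intro he
        refine ⟨?_, ?_, ?_⟩ <;> by_contra hp <;> push_neg at hp
        · have h1 : |b| + |c| ≥ -(b + c) := by
            have := abs_add_le b c
            have := neg_abs_le (b + c)
            linarith
          have := abs_of_pos hp
          nlinarith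
        · have h1 : |a| + |c| ≥ -(a + c) := by
            have := abs_add_le a c
            have := neg_abs_le (a + c)
            linarith
          have := abs_of_pos hp
          nlinarith
        · have h1 : |a| + |b| ≥ -(a + b) := by
            have := abs_add_le a b
            have := neg_abs_le (a + b)
            linarith
          have := abs_of_pos hp
          nlinarith
      · rintro ⟨h1, h2, h3⟩
        rw [abs_of_nonpos h1, abs_of_nonpos h2, abs_of_nonpos h3]
        linarith
    constructor
    · rcases le_or_gt (|a| + |b| + |c|) π with hle | hlt
      · -- show equality: then ≥ π
        have : |a| + |b| + |c| ≥ -(a+b+c) := by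
          have := abs_add_le (a+b) c
          have := abs_add_le a b
          have := neg_abs_le (a+b+c)
          have := neg_abs_le ((a+b)+c)
          nlinarith [neg_abs_le (a+b+c)]
        linarith
      · linarith
    · rw [key]
      constructor
      · rintro ⟨h1, h2, h3⟩
        rcases eq_or_lt_of_le h1 with e1 | l1
        · exact Or.inl (Or.inl e1)
        rcases eq_or_lt_of_le h2 with e2 | l2
        · exact Or.inl (Or.inr (Or.inl e2))
        rcases eq_or_lt_of_le h3 with e3 | l3
        · exact Or.inl (Or.inr (Or.inr e3))
        exact Or.inr (Or.inr ⟨l1, l2, l3⟩)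
      · rintro ((e | e | e) | ⟨p1, _, p2, _, p3, _⟩ | ⟨l1, l2, l3⟩)
        · subst e; exact ⟨le_refl 0, by linarith, by linarith⟩
        · subst e; exact ⟨by linarith, le_refl 0, by linarith⟩
        · subst e; exact ⟨by linarith, by linarith, le_refl 0⟩
        · exfalso; nlinarith
        · exact ⟨l1.le, l2.le, l3.le⟩
  · -- sum = π
    have hsum : a + b + c = π := by push_cast at hn; linarith
    have key : |a| + |b| + |c| = π ↔ (0 ≤ a ∧ 0 ≤ b ∧ 0 ≤ c) := by
      constructor
      · intro he
        refine ⟨?_, ?_, ?_⟩ <;> by_contra hp <;> push_neg at hp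
        · have h1 : |b| + |c| ≥ b + c := by
            have := abs_add_le b c
            have := le_abs_self (b + c)
            linarith
          have := abs_of_neg hp
          nlinarith
        · have h1 : |a| + |c| ≥ a + c := by
            have := abs_add_le a c
            have := le_abs_self (a + c)
            linarith
          have := abs_of_neg hp
          nlinarith
        · have h1 : |a| + |b| ≥ a + b := by
            have := abs_add_le a b
            have := le_abs_self (a + b)
            linarith
          have := abs_of_neg hp
          nlinarith
      · rintro ⟨h1, h2, h3⟩
        rw [abs_of_nonneg h1, abs_of_nonneg h2, abs_of_nonneg h3]
        linarith
    constructor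
    · have : |a| + |b| + |c| ≥ a + b + c := by
        have := le_abs_self a
        have := le_abs_self b
        have := le_abs_self c
        linarith
      linarith
    · rw [key]
      constructor
      · rintro ⟨h1, h2, h3⟩
        rcases eq_or_lt_of_le h1 with e1 | l1
        · exact Or.inl (Or.inl e1.symm)
        rcases eq_or_lt_of_le h2 with e2 | l2
        · exact Or.inl (Or.inr (Or.inl e2.symm))
        rcases eq_or_lt_of_le h3 with e3 | l3
        · exact Or.inl (Or.inr (Or.inr e3.symm))
        rcases eq_or_lt_of_le ha2 with f1 | g1
        · -- a = π forces b = c = 0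
          exact Or.inl (Or.inr (Or.inl (by linarith)))
        rcases eq_or_lt_of_le hb2 with f2 | g2
        · exact Or.inl (Or.inl (by linarith))
        rcases eq_or_lt_of_le hc2 with f3 | g3
        · exact Or.inl (Or.inl (by linarith))
        exact Or.inr (Or.inl ⟨l1, g1, l2, g2, l3, g3⟩)
      · rintro ((e | e | e) | ⟨p1, _, p2, _, p3, _⟩ | ⟨l1, l2, l3⟩)
        · subst e; exact ⟨le_refl 0, by linarith, by linarith⟩
        · subst e; exact ⟨by linarith, le_refl 0, by linarith⟩
        · subst e; exact ⟨by linarith, by linarith, le_refl 0⟩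
        · exact ⟨p1.le, p2.le, p3.le⟩
        · exfalso; nlinarith
  · -- sum = 3π : all equal π
    have hsum : a + b + c = 3 * π := by push_cast at hn; linarith
    have ea : a = π := by linarith
    have eb : b = π := by linarith
    have ec : c = π := by linarith
    subst ea; subst eb; subst ec
    rw [abs_of_pos hπ]
    constructor
    · linarith
    · constructor
      · intro hh; exfalso; linarith
      · rintro ((e | e | e) | ⟨_, hlt, _⟩ | ⟨hl, _, _⟩) <;> exfalso <;> linarith

set_option maxHeartbeats 1000000 in
/-- For unit complex numbers `ω, ω', ω''` with `ω·ω'·ω'' = −1`, one has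
`|Arg ω| + |Arg ω'| + |Arg ω''| ≥ π`, with equality iff `1` is among the angles or all three
imaginary parts are strictly positive or all strictly negative. -/
theorem stmt4 (ω ω' ω'' : ℂ)
    (h : ‖ω‖ = 1) (h' : ‖ω'‖ = 1) (h'' : ‖ω''‖ = 1)
    (hprod : ω * ω' * ω'' = -1) :
    Real.pi ≤ |ω.arg| + |ω'.arg| + |ω''.arg| ∧
    (|ω.arg| + |ω'.arg| + |ω''.arg| = Real.pi ↔
      (ω = 1 ∨ ω' = 1 ∨ ω'' = 1) ∨
      (0 < ω.im ∧ 0 < ω'.im ∧ 0 < ω''.im) ∨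
      (ω.im < 0 ∧ ω'.im < 0 ∧ ω''.im < 0)) := by
  have hω : Complex.exp (ω.arg * Complex.I) = ω := by
    have := Complex.norm_mul_exp_arg_mul_I ω
    rwa [h, Complex.ofReal_one, one_mul] at this
  have hω' : Complex.exp (ω'.arg * Complex.I) = ω' := by
    have := Complex.norm_mul_exp_arg_mul_I ω'
    rwa [h', Complex.ofReal_one, one_mul] at this
  have hω'' : Complex.exp (ω''.arg * Complex.I) = ω'' := by
    have := Complex.norm_mul_exp_arg_mul_I ω''
    rwa [h'', Complex.ofReal_one, one_mul] at this
  have hexp : Complex.exp ((ω.arg + ω'.arg + ω''.arg : ℝ) * Complex.I)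
      = Complex.exp ((π : ℝ) * Complex.I) := by
    have e1 : ((ω.arg + ω'.arg + ω''.arg : ℝ) : ℂ) * Complex.I
        = ω.arg * Complex.I + ω'.arg * Complex.I + ω''.arg * Complex.I := by push_cast; ring
    rw [e1, Complex.exp_add, Complex.exp_add, hω, hω', hω'', hprod, Complex.exp_pi_mul_I]
  obtain ⟨n, hneq⟩ := Complex.exp_eq_exp_iff_exists_int.mp hexp
  have hsum : ω.arg + ω'.arg + ω''.arg = π + 2 * π * n := by
    have h2 : ((ω.arg + ω'.arg + ω''.arg : ℝ) : ℂ) * Complex.I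
        = ((π + 2 * π * n : ℝ) : ℂ) * Complex.I := by
      rw [hneq]; push_cast; ring
    exact_mod_cast mul_right_cancel₀ Complex.I_ne_zero h2
  have core := core_lemma ω.arg ω'.arg ω''.arg
    (Complex.neg_pi_lt_arg ω) (Complex.arg_le_pi ω)
    (Complex.neg_pi_lt_arg ω') (Complex.arg_le_pi ω')
    (Complex.neg_pi_lt_arg ω'') (Complex.arg_le_pi ω'') n hsum
  -- translate conditions
  have hone : ∀ z : ℂ, ‖z‖ = 1 → (z.arg = 0 ↔ z = 1) := by
    intro z hz
    constructor
    · intro ha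
      obtain ⟨hre, him⟩ := Complex.arg_eq_zero_iff.mp ha
      have : z.re = 1 := by
        have := Complex.sq_norm z
        rw [hz] at this
        simp [Complex.normSq_apply, him] at this
        nlinarith
      exact Complex.ext (by simpa using this) (by simpa using him)
    · intro hz1; rw [hz1]; exact Complex.arg_one
  have hsin : ∀ z : ℂ, ‖z‖ = 1 → z.im = Real.sin z.arg := by
    intro z hz
    have := Complex.sin_arg z
    rw [hz, div_one] at this
    exact this.symm
  have himpos : ∀ z : ℂ, ‖z‖ = 1 → (0 < z.im ↔ 0 < z.arg ∧ z.arg < π) := by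
    intro z hz
    rw [hsin z hz]
    constructor
    · intro hp
      constructor
      · by_contra hh
        push_neg at hh
        have : Real.sin z.arg ≤ 0 := by
          rcases lt_or_eq_of_le hh with hlt | he
          · have h1 := Complex.neg_pi_lt_arg z
            have := Real.sin_nonpos_of_nonpos_of_neg_pi_le hh (by linarith)
            exact this
          · rw [he]; simp
        linarith
      · rcases lt_or_eq_of_le (Complex.arg_le_pi z) with hlt | he
        · exact hlt
        · exfalso; rw [he] at hp; simp at hp
    · rintro ⟨h1, h2⟩
      exact Real.sin_pos_of_pos_of_lt_pi h1 h2
  have himneg : ∀ z : ℂ, ‖z‖ = 1 → (z.im < 0 ↔ z.arg < 0) :=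
    fun z _ => Complex.arg_neg_iff.symm
  refine ⟨core.1, ?_⟩
  rw [core.2, ← hone ω h, ← hone ω' h', ← hone ω'' h'',
    himpos ω h, himpos ω' h', himpos ω'' h'', himneg ω h, himneg ω' h', himneg ω'' h'']
  tauto
end

section
/- For every integer m ≤ 0 and every ω on the unit circle with ω ≠ 1, the Lerch zeta function satisfies ζ_ω(m) = Li_m(ω), where ζ_ω(s) = ∑_{n≥1} ω^n/n^s (analytically continued in s) and Li_m is the negative-order polylogarithm. -/
open Complex Finset Function
open scoped fwdDiff

/-- The negative-order polylogarithms: `negPolylog m z = Li_{-m}(z)`, defined recursively by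
`Li₀(z) = z/(1−z)` and `Li_{m−1}(z) = z · (d/dz) Li_m(z)`. -/
noncomputable def negPolylog : ℕ → ℂ → ℂ
  | 0 => fun z => z / (1 - z)
  | (m + 1) => fun z => z * deriv (negPolylog m) z

/-! ### Combinatorial part: iterated forward differences of `n ↦ (n+1)^m` -/

noncomputable def pp (m : ℕ) : ℕ → ℂ := fun n => ((n : ℂ) + 1) ^ m

noncomputable def Acoef (m j : ℕ) : ℂ := Δ_[1] ^[j] (pp m) 0

lemma Acoef_zero (m : ℕ) : Acoef m 0 = 1 := by simp [Acoef, pp]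

lemma fwdDiff_pp (m : ℕ) :
    Δ_[1] (pp m) = fun n => ∑ i ∈ range m, (m.choose i : ℂ) • pp i n := by
  funext n
  have h : (((n : ℂ) + 1) + 1) ^ m = ∑ i ∈ range (m + 1), ((n : ℂ) + 1) ^ i * m.choose i := by
    rw [add_pow]; simp
  simp only [fwdDiff, pp]
  push_cast
  rw [show ((n : ℂ) + 1 + 1) = ((n:ℂ) + 1) + 1 by ring, h, Finset.sum_range_succ]
  simp [mul_comm]

lemma fwdDiff_pp_zero {m k : ℕ} (h : m < k) : Δ_[1] ^[k] (pp m) = 0 := by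
  induction m using Nat.strong_induction_on generalizing k with
  | _ m IH =>
    cases k with
    | zero => omega
    | succ k =>
      rw [Function.iterate_succ_apply, fwdDiff_pp]
      have : (fun n => ∑ i ∈ range m, (m.choose i : ℂ) • pp i n)
          = ∑ i ∈ range m, (m.choose i : ℂ) • pp i := by
        funext n; simp
      rw [this, fwdDiff_iter_finset_sum]
      refine Finset.sum_eq_zero fun i hi => ?_
      have him := Finset.mem_range.mp hi
      rw [fwdDiff_iter_const_smul, IH i him (by omega)]
      simp

lemma Acoef_eq_zero {m j : ℕ} (h : m < j) : Acoef m j = 0 := by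
  rw [Acoef, fwdDiff_pp_zero h]; rfl

lemma fwdDiff_shiftmul (p : ℕ → ℂ) (j : ℕ) : ∀ n : ℕ,
    Δ_[1] ^[j+1] (fun n : ℕ => ((n:ℂ)+1) * p n) n
      = ((n:ℂ)+1) * Δ_[1] ^[j+1] p n + ((j:ℂ)+1) * Δ_[1] ^[j] p (n+1) := by
  induction j with
  | zero =>
      intro n
      simp only [zero_add, Function.iterate_one, iterate_zero, id_eq, fwdDiff]
      push_cast; ring
  | succ j IH =>
      intro n
      have e1 : Δ_[1] ^[j+1+1] (fun n : ℕ => ((n:ℂ)+1) * p n) n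
          = Δ_[1] ^[j+1] (fun n : ℕ => ((n:ℂ)+1) * p n) (n+1)
            - Δ_[1] ^[j+1] (fun n : ℕ => ((n:ℂ)+1) * p n) n := by
        rw [Function.iterate_succ_apply']; rfl
      have e2 : Δ_[1] ^[j+1+1] p n = Δ_[1] ^[j+1] p (n+1) - Δ_[1] ^[j+1] p n := by
        rw [Function.iterate_succ_apply']; rfl
      have e3 : Δ_[1] ^[j+1] p (n+1) = Δ_[1] ^[j] p (n+1+1) - Δ_[1] ^[j] p (n+1) := by
        rw [Function.iterate_succ_apply']; rfl
      rw [e1, IH (n+1), IH n, e2, e3]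
      push_cast; ring

lemma Acoef_succ_succ (m j : ℕ) :
    Acoef (m+1) (j+1) = ((j:ℂ)+2) * Acoef m (j+1) + ((j:ℂ)+1) * Acoef m j := by
  have hpp : pp (m+1) = fun n : ℕ => ((n:ℂ)+1) * pp m n := by
    funext n; simp only [pp, pow_succ]; ring
  have h0 := fwdDiff_shiftmul (pp m) j 0
  have e4 : Δ_[1] ^[j] (pp m) 1 = Δ_[1] ^[j+1] (pp m) 0 + Δ_[1] ^[j] (pp m) 0 := by
    rw [Function.iterate_succ_apply']
    show _ = (Δ_[1] ^[j] (pp m)) (0 + 1) - _ + _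
    ring_nf
  rw [Acoef, hpp, h0, e4, Acoef, Acoef]
  push_cast; ring

/-! ### The rational function `ratH` and its relation to `negPolylog` -/

noncomputable def ratH (m : ℕ) (z : ℂ) : ℂ :=
  ∑ j ∈ range (m+1), (z/(1-z))^(j+1) * Acoef m j

lemma sum_step (m : ℕ) (u : ℂ) :
    ∑ j ∈ range (m+1), ((j:ℂ)+1) * (u^(j+1) + u^(j+2)) * Acoef m j
      = ∑ j ∈ range (m+2), u^(j+1) * Acoef (m+1) j := by
  have hz : Acoef m (m+1) = 0 := Acoef_eq_zero (by omega)
  rw [Finset.sum_range_succ' (fun j => u^(j+1) * Acoef (m+1) j) (m+1)]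
  have e : ∑ j ∈ range (m+1), u^(j+1+1) * Acoef (m+1) (j+1)
      = ∑ j ∈ range (m+1), (((j:ℂ)+2) * u^(j+2) * Acoef m (j+1)
          + ((j:ℂ)+1) * u^(j+2) * Acoef m j) := by
    refine Finset.sum_congr rfl fun j _ => ?_
    rw [Acoef_succ_succ]; ring
  rw [e, Finset.sum_add_distrib, Acoef_zero]
  have e2 : ∑ j ∈ range (m+1), ((j:ℂ)+1) * (u^(j+1) + u^(j+2)) * Acoef m j
      = ∑ j ∈ range (m+1), ((j:ℂ)+1) * u^(j+1) * Acoef m j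
        + ∑ j ∈ range (m+1), ((j:ℂ)+1) * u^(j+2) * Acoef m j := by
    rw [← Finset.sum_add_distrib]; exact Finset.sum_congr rfl fun j _ => by ring
  rw [e2]
  have e3 : ∑ j ∈ range (m+1), ((j:ℂ)+1) * u^(j+1) * Acoef m j
      = ∑ j ∈ range m, ((j:ℂ)+2) * u^(j+2) * Acoef m (j+1) + u * Acoef m 0 := by
    rw [Finset.sum_range_succ' (fun j => ((j:ℂ)+1) * u^(j+1) * Acoef m j) m]
    congr 1
    · refine Finset.sum_congr rfl fun j _ => ?_
      push_cast; ring
    · norm_num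
  have e4 : ∑ j ∈ range (m+1), ((j:ℂ)+2) * u^(j+2) * Acoef m (j+1)
      = ∑ j ∈ range m, ((j:ℂ)+2) * u^(j+2) * Acoef m (j+1) := by
    rw [Finset.sum_range_succ, hz]; ring
  rw [e3, e4, Acoef_zero]
  ring

lemma hasDerivAt_ratH (m : ℕ) {z : ℂ} (hz : z ≠ 1) :
    HasDerivAt (ratH m)
      (∑ j ∈ range (m+1), ((j:ℂ)+1) * (z/(1-z))^j * ((1-z)^2)⁻¹ * Acoef m j) z := by
  have h1z : (1:ℂ) - z ≠ 0 := sub_ne_zero.mpr (Ne.symm hz)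
  have hu : HasDerivAt (fun w : ℂ => w/(1-w)) (((1-z)^2)⁻¹) z := by
    have := (hasDerivAt_id z).div ((hasDerivAt_const z 1).sub (hasDerivAt_id z)) h1z
    refine this.congr_deriv ?_
    simp
  have : HasDerivAt (fun w => ∑ j ∈ range (m+1), (w/(1-w))^(j+1) * Acoef m j)
      (∑ j ∈ range (m+1), ((j:ℂ)+1) * (z/(1-z))^j * ((1-z)^2)⁻¹ * Acoef m j) z := by
    refine HasDerivAt.fun_sum fun j _ => ?_
    have := (hu.pow (j+1)).mul_const (Acoef m j)
    refine this.congr_deriv ?_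
    push_cast
    ring_nf
  exact this

lemma negPolylog_eq_ratH : ∀ (m : ℕ) (z : ℂ), z ≠ 1 → negPolylog m z = ratH m z := by
  intro m
  induction m with
  | zero =>
      intro z hz
      simp [negPolylog, ratH, Acoef_zero]
  | succ m IH =>
      intro z hz
      have hopen : IsOpen {w : ℂ | w ≠ 1} := isOpen_compl_singleton
      have hderiv : deriv (negPolylog m) z = deriv (ratH m) z := by
        apply Filter.EventuallyEq.deriv_eq
        exact Filter.eventually_of_mem (hopen.mem_nhds hz) fun w hw => IH w hw
      have h1z : (1:ℂ) - z ≠ 0 := sub_ne_zero.mpr (Ne.symm hz)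
      have key : ∀ j : ℕ, z * (((j:ℂ)+1) * (z/(1-z))^j * ((1-z)^2)⁻¹ * Acoef m j)
          = ((j:ℂ)+1) * ((z/(1-z))^(j+1) + (z/(1-z))^(j+2)) * Acoef m j := by
        intro j
        rw [div_pow, div_pow, div_pow]
        field_simp
        ring
      show z * deriv (negPolylog m) z = ratH (m+1) z
      rw [hderiv, (hasDerivAt_ratH m hz).deriv, Finset.mul_sum]
      rw [Finset.sum_congr rfl fun j _ => key j, sum_step]
      rfl
/-- `q s a n = (n+1+a)^{-s}`. -/
noncomputable def q (s : ℂ) (a : ℝ) (n : ℕ) : ℂ := (((n:ℝ) + 1 + a : ℝ) : ℂ) ^ (-s)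

lemma q_base_pos (a : ℝ) (ha : 0 ≤ a) (n : ℕ) : 0 < (n:ℝ) + 1 + a := by positivity

lemma contOn_q (s : ℂ) (a : ℝ) (ha : 0 ≤ a) (n : ℕ) :
    ContinuousOn (fun t : ℝ => q (s) (a+t) n) (Set.uIcc 0 1) := by
  have : ∀ t ∈ Set.uIcc (0:ℝ) 1, ((((n:ℝ) + 1 + (a + t) : ℝ) : ℂ)) ∈ Complex.slitPlane := by
    intro t ht
    rw [Set.uIcc_of_le zero_le_one] at ht
    exact Complex.ofReal_mem_slitPlane.2 (by nlinarith [ht.1])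
  refine ContinuousOn.cpow ?_ continuousOn_const this
  exact Continuous.continuousOn (by fun_prop)

lemma fwdDiff_q (s : ℂ) (a : ℝ) (ha : 0 ≤ a) :
    Δ_[1] (q s a) = fun n => ∫ t in (0:ℝ)..1, (-s) * q (s+1) (a+t) n := by
  funext n
  have key : ∀ t ∈ Set.uIcc (0:ℝ) 1,
      HasDerivAt (fun t : ℝ => (((n:ℝ) + 1 + a + t : ℝ) : ℂ) ^ (-s))
        ((-s) * q (s+1) (a+t) n) t := by
    intro t ht
    rw [Set.uIcc_of_le zero_le_one] at ht
    have hx : (0:ℝ) < (n:ℝ) + 1 + a + t := by nlinarith [ht.1]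
    have h1 : HasDerivAt (fun y : ℝ => ((y:ℂ)) ^ (-s))
        ((-s) * ((((n:ℝ) + 1 + a + t : ℝ)) : ℂ) ^ (-s - 1)) ((n:ℝ) + 1 + a + t) := by
      have := (Complex.hasStrictDerivAt_cpow_const (c := -s)
        (Complex.ofReal_mem_slitPlane.2 hx)).hasDerivAt.comp_ofReal
      simpa using this
    have h2 : HasDerivAt (fun y : ℝ => (n:ℝ) + 1 + a + y) 1 t := (hasDerivAt_id t).const_add _
    have h3 := HasDerivAt.scomp_of_eq (F := ℂ) (h := fun y : ℝ => (n:ℝ) + 1 + a + y) t h1 h2 rfl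
    have h4 : -s * q (s+1) (a+t) n = (1:ℝ) • (-s * (((n:ℝ) + 1 + a + t : ℝ):ℂ) ^ (-s-1)) := by
      rw [one_smul, q]
      congr 1
      congr 1
      · push_cast; ring
      · ring
    rw [h4]; exact h3
  have hinte : IntervalIntegrable (fun t => (-s) * q (s+1) (a+t) n) MeasureTheory.volume 0 1 :=
    ((contOn_q (s+1) a ha n).const_smul (-s)).intervalIntegrable
  have := intervalIntegral.integral_eq_sub_of_hasDerivAt key hinte
  rw [this, fwdDiff, q, q]
  push_cast
  norm_num
  congr 1
  push_cast
  ring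

lemma fwdDiff_q_bound : ∀ (k : ℕ) (s : ℂ) (a : ℝ), 0 ≤ a → 0 ≤ s.re + k → ∀ n : ℕ,
    ‖Δ_[1] ^[k] (q s a) n‖ ≤ (∏ i ∈ range k, ‖s + (i:ℂ)‖) * ((n:ℝ)+1) ^ (-(s.re) - k) := by
  intro k
  induction k with
  | zero =>
      intro s a ha hs n
      simp only [iterate_zero, id_eq, range_zero, prod_empty, one_mul, Nat.cast_zero, sub_zero]
      rw [q, Complex.norm_cpow_eq_rpow_re_of_pos (q_base_pos a ha n), neg_re]
      have h0 : -s.re ≤ 0 := by simpa using hs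
      exact Real.rpow_le_rpow_of_nonpos (by positivity) (by linarith) h0
  | succ k IH =>
      intro s a ha hs n
      have hs' : 0 ≤ (s+1).re + k := by
        simp only [Complex.add_re, Complex.one_re]
        push_cast at hs; linarith
      have swap : Δ_[1] ^[k+1] (q s a) n
          = ∫ t in (0:ℝ)..1, (-s) * (Δ_[1] ^[k] (q (s+1) (a+t))) n := by
        rw [Function.iterate_succ_apply, fwdDiff_q s a ha, fwdDiff_iter_eq_sum_shift]
        have e1 : ∀ t : ℝ, (-s) * (Δ_[1] ^[k] (q (s+1) (a+t))) n
            = ∑ i ∈ range (k+1), (((-1:ℤ)^(k-i) * (k.choose i) : ℤ) : ℂ)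
                * ((-s) * q (s+1) (a+t) (n + i • 1)) := by
          intro t
          rw [fwdDiff_iter_eq_sum_shift, Finset.mul_sum]
          refine Finset.sum_congr rfl fun i _ => ?_
          rw [zsmul_eq_mul]
          push_cast
          ring
        rw [intervalIntegral.integral_congr
          (g := fun t => ∑ i ∈ range (k+1), (((-1:ℤ)^(k-i) * (k.choose i) : ℤ) : ℂ)
            * ((-s) * q (s+1) (a+t) (n + i • 1))) (fun t _ => e1 t)]
        rw [intervalIntegral.integral_finset_sum]
        · refine Finset.sum_congr rfl fun i _ => ?_
          rw [zsmul_eq_mul, ← intervalIntegral.integral_const_mul]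
        · intro i _
          apply ContinuousOn.intervalIntegrable
          exact continuousOn_const.mul (continuousOn_const.mul (contOn_q (s+1) a ha (n + i • 1)))
      rw [swap]
      have hbound : ∀ t ∈ Set.uIoc (0:ℝ) 1,
          ‖(-s) * (Δ_[1] ^[k] (q (s+1) (a+t))) n‖
            ≤ ‖s‖ * ((∏ i ∈ range k, ‖s + 1 + (i:ℂ)‖) * ((n:ℝ)+1) ^ (-(s.re+1) - k)) := by
        intro t ht
        rw [Set.uIoc_of_le zero_le_one] at ht
        have ht0 : 0 ≤ t := ht.1.le
        have := IH (s+1) (a+t) (by positivity) hs' n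
        rw [norm_mul, norm_neg]
        have hre : (s+1).re = s.re + 1 := by simp
        rw [hre] at this
        have : (∏ i ∈ range k, ‖s + 1 + (i:ℂ)‖) * ((n:ℝ)+1) ^ (-(s.re+1) - k)
            = (∏ i ∈ range k, ‖(s+1) + (i:ℂ)‖) * ((n:ℝ)+1) ^ (-(s.re+1) - k) := rfl
        calc ‖s‖ * ‖Δ_[1] ^[k] (q (s+1) (a+t)) n‖
            ≤ ‖s‖ * ((∏ i ∈ range k, ‖(s+1) + (i:ℂ)‖) * ((n:ℝ)+1) ^ (-(s.re+1) - k)) := by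
              apply mul_le_mul_of_nonneg_left _ (norm_nonneg s)
              exact IH (s+1) (a+t) (by positivity) hs' n |>.trans_eq (by rw [hre])
          _ = _ := rfl
      have hint := intervalIntegral.norm_integral_le_of_norm_le_const hbound
      simp only [sub_zero, abs_one, mul_one] at hint
      refine hint.trans (le_of_eq ?_)
      have hprod : ∏ i ∈ range (k+1), ‖s + (i:ℂ)‖
          = ‖s‖ * ∏ i ∈ range k, ‖s + 1 + (i:ℂ)‖ := by
        rw [Finset.prod_range_succ']
        simp only [Nat.cast_zero, add_zero]
        rw [mul_comm]
        congr 1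
        refine Finset.prod_congr rfl fun i _ => ?_
        congr 1
        push_cast
        ring
      have hexp : -(s.re+1) - (k:ℝ) = -s.re - ((k:ℕ)+1 : ℕ) := by push_cast; ring
      rw [hprod, hexp, mul_assoc]
noncomputable def gg (s : ℂ) : ℕ → ℂ := fun n => ((n:ℂ)+1) ^ (-s)

lemma hasSum_fwdDiff_step {ω : ℂ} (hω0 : ω ≠ 0) {f : ℕ → ℂ} {S : ℂ}
    (h : HasSum (fun n => ω^(n+1) * f n) S) :
    HasSum (fun n => ω^(n+1) * (Δ_[1] f) n) (((1-ω)/ω) * S - f 0) := by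
  have h1 : HasSum (fun n : ℕ => ω^(n+1+1) * f (n+1)) (S - ω^(0+1) * f 0) := by
    have hval : (S - ω^(0+1) * f 0) + ∑ i ∈ range 1, ω^(i+1) * f i = S := by simp
    have := (hasSum_nat_add_iff (f := fun n => ω^(n+1) * f n) 1).2 (by rw [hval]; exact h)
    exact this
  have h2 : HasSum (fun n : ℕ => ω^(n+1) * f (n+1)) (ω⁻¹ * (S - ω^(0+1) * f 0)) := by
    have h2' := h1.mul_left ω⁻¹
    have e : (fun n : ℕ => ω⁻¹ * (ω^(n+1+1) * f (n+1))) = fun n : ℕ => ω^(n+1) * f (n+1) := by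
      funext n; rw [pow_succ]; field_simp
    rwa [e] at h2'
  have h3 := h2.sub h
  have hfun : (fun n : ℕ => ω^(n+1) * f (n+1) - ω^(n+1) * f n)
      = fun n : ℕ => ω^(n+1) * (Δ_[1] f) n := by
    funext n; simp only [fwdDiff]; ring
  have hval : ω⁻¹ * (S - ω^(0+1) * f 0) - S = ((1-ω)/ω) * S - f 0 := by
    field_simp; ring
  rw [hfun, hval] at h3
  exact h3

lemma hasSum_fwdDiff_iter {ω : ℂ} (hω0 : ω ≠ 0) {f : ℕ → ℂ} {S : ℂ}
    (h : HasSum (fun n => ω^(n+1) * f n) S) (k : ℕ) :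
    HasSum (fun n => ω^(n+1) * (Δ_[1] ^[k] f) n)
      (((1-ω)/ω)^k * S - ∑ j ∈ range k, ((1-ω)/ω)^(k-1-j) * (Δ_[1] ^[j] f) 0) := by
  induction k with
  | zero => simpa using h
  | succ k IH =>
      have step := hasSum_fwdDiff_step hω0 IH
      have efun : (fun n => ω^(n+1) * (Δ_[1] (Δ_[1] ^[k] f)) n)
          = fun n => ω^(n+1) * (Δ_[1] ^[k+1] f) n := by
        rw [Function.iterate_succ_apply' Δ_[1] k f]
      rw [efun] at step
      convert step using 1
      set c := (1-ω)/ω with hc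
      have e1 : ∑ j ∈ range k, c^(k-j) * (Δ_[1] ^[j] f) 0
          = c * ∑ j ∈ range k, c^(k-1-j) * (Δ_[1] ^[j] f) 0 := by
        rw [Finset.mul_sum]
        refine Finset.sum_congr rfl fun j hj => ?_
        have hjk := Finset.mem_range.mp hj
        have h2 : k - j = (k-1-j) + 1 := by omega
        rw [h2, pow_succ]
        ring
      simp only [Nat.add_sub_cancel]
      rw [Finset.sum_range_succ, Nat.sub_self, pow_zero, e1, pow_succ]
      ring
lemma gg_eq_q (s : ℂ) : gg s = q s 0 := by
  funext n; rw [gg, q]; norm_num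

lemma fwdDiff_gg_apply (k n : ℕ) (s : ℂ) :
    (Δ_[1] ^[k] (gg s)) n
      = ∑ i ∈ range (k+1), (((-1:ℤ)^(k-i) * (k.choose i) : ℤ) : ℂ)
          * (((n + i + 1 : ℕ) : ℂ)) ^ (-s) := by
  rw [fwdDiff_iter_eq_sum_shift]
  refine Finset.sum_congr rfl fun i _ => ?_
  rw [zsmul_eq_mul]
  congr 1
  rw [gg]
  congr 1
  push_cast
  simp [smul_eq_mul]

lemma diff_fwdDiff_gg (k n : ℕ) : Differentiable ℂ (fun s => (Δ_[1] ^[k] (gg s)) n) := by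
  have e : (fun s => (Δ_[1] ^[k] (gg s)) n)
      = fun s => ∑ i ∈ range (k+1), (((-1:ℤ)^(k-i) * (k.choose i) : ℤ) : ℂ)
          * (((n + i + 1 : ℕ) : ℂ)) ^ (-s) := by
    funext s; rw [fwdDiff_gg_apply]
  rw [e]
  apply Differentiable.fun_sum
  intro i _
  refine Differentiable.const_mul ?_ _
  exact Differentiable.const_cpow differentiable_id.neg
    (Or.inl (Nat.cast_ne_zero.2 (by omega)))

noncomputable def phiF (ω : ℂ) (k : ℕ) : ℂ → ℂ :=
  fun s => ∑' n : ℕ, ω^(n+1) * (Δ_[1] ^[k] (gg s)) n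

lemma phiF_diffAt {ω : ℂ} (hω : ‖ω‖ = 1) (k : ℕ) {s₀ : ℂ}
    (h : 1 - (k:ℝ) < s₀.re) : DifferentiableAt ℂ (phiF ω k) s₀ := by
  set δ : ℝ := (s₀.re - (1 - (k:ℝ)))/2 with hδdef
  have hδ : 0 < δ := by simp only [hδdef]; linarith
  set M : ℝ := (‖s₀‖ + δ + k)^k with hM
  set u : ℕ → ℝ := fun n => M * ((n:ℝ)+1) ^ (-(1+δ)) with hudef
  have hM0 : 0 ≤ M := by positivity
  have hu : Summable u := by
    have h1 : Summable (fun n : ℕ => ((n:ℝ)) ^ (-(1+δ))) :=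
      Real.summable_nat_rpow.mpr (by linarith)
    have h2 := (summable_nat_add_iff 1).2 h1
    have h3 : (fun n : ℕ => (((n+1 : ℕ)):ℝ) ^ (-(1+δ)))
        = fun n : ℕ => ((n:ℝ)+1) ^ (-(1+δ)) := by
      funext n; norm_num
    rw [h3] at h2
    exact h2.mul_left M
  have hbd : ∀ (n : ℕ), ∀ s ∈ Metric.ball s₀ δ, ‖ω^(n+1) * (Δ_[1] ^[k] (gg s)) n‖ ≤ u n := by
    intro n s hs
    have hdist : ‖s - s₀‖ < δ := by
      rw [Metric.mem_ball, Complex.dist_eq] at hs; exact hs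
    have hre : s₀.re - δ < s.re := by
      have h1 : |(s - s₀).re| ≤ ‖s - s₀‖ := Complex.abs_re_le_norm _
      rw [Complex.sub_re] at h1
      have := abs_le.1 h1
      linarith [this.1]
    have hsre : 1 - (k:ℝ) + δ < s.re := by
      have : s₀.re = 1 - (k:ℝ) + 2*δ := by rw [hδdef]; ring
      linarith
    have hnorm : ‖ω^(n+1) * (Δ_[1] ^[k] (gg s)) n‖ = ‖(Δ_[1] ^[k] (gg s)) n‖ := by
      rw [norm_mul, norm_pow, hω, one_pow, one_mul]
    rw [hnorm, gg_eq_q]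
    have hb := fwdDiff_q_bound k s 0 le_rfl (by push_cast; linarith) n
    refine hb.trans ?_
    have hP : ∏ i ∈ range k, ‖s + (i:ℂ)‖ ≤ M := by
      rw [hM]
      calc ∏ i ∈ range k, ‖s + (i:ℂ)‖
          ≤ ∏ _i ∈ range k, (‖s₀‖ + δ + k) := by
            refine Finset.prod_le_prod (fun i _ => norm_nonneg _) (fun i hi => ?_)
            have hik : (i:ℝ) ≤ k := by
              have := Finset.mem_range.mp hi
              exact_mod_cast this.le
            have hns : ‖s‖ ≤ ‖s₀‖ + δ := by
              have h1 := norm_sub_norm_le s s₀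
              have h2 : ‖s - s₀‖ < δ := by exact hdist
              have h3 : ‖s₀‖ = ‖s₀‖ := rfl
              linarith
            calc ‖s + (i:ℂ)‖ ≤ ‖s‖ + ‖(i:ℂ)‖ := norm_add_le _ _
              _ ≤ (‖s₀‖ + δ) + k := by
                  rw [Complex.norm_natCast]
                  exact add_le_add hns hik
              _ = ‖s₀‖ + δ + k := by ring
        _ = (‖s₀‖ + δ + k)^k := by rw [Finset.prod_const, Finset.card_range]
    have hr : ((n:ℝ)+1) ^ (-(s.re) - k) ≤ ((n:ℝ)+1) ^ (-(1+δ)) := by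
      refine Real.rpow_le_rpow_of_exponent_le (by push_cast; linarith) ?_
      linarith
    rw [hudef]
    exact mul_le_mul hP hr (Real.rpow_nonneg (by positivity) _) hM0
  have hdiff : DifferentiableOn ℂ
      (fun s => ∑' n : ℕ, ω^(n+1) * (Δ_[1] ^[k] (gg s)) n) (Metric.ball s₀ δ) :=
    differentiableOn_tsum_of_summable_norm hu
      (fun n => ((differentiable_const (ω^(n+1))).mul (diff_fwdDiff_gg k n)).differentiableOn)
      Metric.isOpen_ball (fun n s hs => hbd n s hs)
  exact (hdiff.differentiableAt (Metric.isOpen_ball.mem_nhds (Metric.mem_ball_self hδ)))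

/-- For `|ω| = 1`, `ω ≠ 1`, the analytic continuation of the Lerch zeta function
`ζ_ω(s) = ∑_{n ≥ 1} ωⁿ n^{−s}` (encoded as any entire function `F` agreeing with the series
for `Re s > 1`) satisfies `ζ_ω(−m) = Li_{−m}(ω)` for every integer `m ≥ 0`. -/
theorem stmt11 (ω : ℂ) (hω : ‖ω‖ = 1) (hω1 : ω ≠ 1)
    (F : ℂ → ℂ) (hF : Differentiable ℂ F)
    (hFs : ∀ s : ℂ, 1 < s.re →
      HasSum (fun n : ℕ => ω ^ (n + 1) / ((n : ℂ) + 1) ^ s) (F s))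
    (m : ℕ) :
    F (-(m : ℂ)) = negPolylog m ω := by
  have hω0 : ω ≠ 0 := by
    intro h; rw [h] at hω; simp at hω
  have h1ω : (1:ℂ) - ω ≠ 0 := sub_ne_zero.mpr (Ne.symm hω1)
  set k : ℕ := m + 2 with hk
  set uu : ℂ := ω / (1 - ω) with huu
  set G : ℂ → ℂ := fun s => uu^k * phiF ω k s
    + ∑ j ∈ range k, uu^(j+1) * (Δ_[1] ^[j] (gg s)) 0 with hG
  have hcu : uu * ((1-ω)/ω) = 1 := by rw [huu]; field_simp
  -- agreement on re s > 1
  have hagree : ∀ s : ℂ, 1 < s.re → F s = G s := by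
    intro s hs
    have h0 := hFs s hs
    have e : (fun n : ℕ => ω^(n+1) / ((n:ℂ)+1)^s) = fun n : ℕ => ω^(n+1) * gg s n := by
      funext n; rw [gg, cpow_neg, div_eq_mul_inv]
    rw [e] at h0
    have hsum := hasSum_fwdDiff_iter hω0 h0 k
    have htsum : phiF ω k s = ((1-ω)/ω)^k * F s
        - ∑ j ∈ range k, ((1-ω)/ω)^(k-1-j) * (Δ_[1] ^[j] (gg s)) 0 := hsum.tsum_eq
    have e2 : uu^k * ∑ j ∈ range k, ((1-ω)/ω)^(k-1-j) * (Δ_[1] ^[j] (gg s)) 0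
        = ∑ j ∈ range k, uu^(j+1) * (Δ_[1] ^[j] (gg s)) 0 := by
      rw [Finset.mul_sum]
      refine Finset.sum_congr rfl fun j hj => ?_
      have hjk := Finset.mem_range.mp hj
      have hsplit : (k-1-j) + (j+1) = k := by omega
      have h1 : uu^(k-1-j) * ((1-ω)/ω)^(k-1-j) = 1 := by rw [← mul_pow, hcu, one_pow]
      have hp : uu^k = uu^(k-1-j) * uu^(j+1) := by rw [← pow_add, hsplit]
      calc uu^k * (((1-ω)/ω)^(k-1-j) * (Δ_[1] ^[j] (gg s)) 0)
          = (uu^(k-1-j) * ((1-ω)/ω)^(k-1-j)) * (uu^(j+1) * (Δ_[1] ^[j] (gg s)) 0) := by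
            rw [hp]; ring
        _ = uu^(j+1) * (Δ_[1] ^[j] (gg s)) 0 := by rw [h1, one_mul]
    have e3 : uu^k * ((1-ω)/ω)^k = 1 := by rw [← mul_pow, hcu, one_pow]
    have : G s = F s := by
      rw [hG]
      simp only []
      rw [htsum, mul_sub, e2, ← mul_assoc, e3, one_mul]
      ring
    exact this.symm
  -- the open halfplane
  set U : Set ℂ := {s : ℂ | 1 - (k:ℝ) < s.re} with hU
  have hUo : IsOpen U := by
    have : U = Complex.re ⁻¹' Set.Ioi (1 - (k:ℝ)) := rfl
    rw [this]
    exact IsOpen.preimage Complex.continuous_re isOpen_Ioi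
  have hUp : IsPreconnected U := by
    have : Convex ℝ U := convex_halfSpace_re_gt _
    exact this.isPreconnected
  have hFan : AnalyticOnNhd ℂ F U :=
    (hF.differentiableOn).analyticOnNhd hUo
  have hGan : AnalyticOnNhd ℂ G U := by
    refine DifferentiableOn.analyticOnNhd
      (fun s hs => DifferentiableAt.differentiableWithinAt ?_) hUo
    have h1 : DifferentiableAt ℂ (phiF ω k) s := phiF_diffAt hω k hs
    have h2 : DifferentiableAt ℂ
        (fun s => ∑ j ∈ range k, uu^(j+1) * (Δ_[1] ^[j] (gg s)) 0) s := by
      refine DifferentiableAt.fun_sum fun j _ => ?_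
      exact ((diff_fwdDiff_gg j 0) s).const_mul _
    exact (h1.const_mul _).add h2
  have h2U : (2:ℂ) ∈ U := by
    simp only [hU, Set.mem_setOf_eq]
    have : ((2:ℂ)).re = 2 := by norm_num
    rw [this]; push_cast; linarith
  have hmU : (-(m:ℂ)) ∈ U := by
    simp only [hU, Set.mem_setOf_eq, Complex.neg_re, Complex.natCast_re]
    push_cast [hk]; linarith
  have hV : {z : ℂ | 1 < z.re} ∈ nhds (2:ℂ) := by
    refine (IsOpen.preimage Complex.continuous_re isOpen_Ioi).mem_nhds ?_
    simp only [Set.mem_preimage, Set.mem_Ioi]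
    norm_num
  have hFG : F =ᶠ[nhds (2:ℂ)] G :=
    Filter.eventually_of_mem hV fun s hs => hagree s hs
  have heq := hFan.eqOn_of_preconnected_of_eventuallyEq hGan hUp h2U hFG
  have hFm : F (-(m:ℂ)) = G (-(m:ℂ)) := heq hmU
  -- evaluate G at -m
  have hgg : gg (-(m:ℂ)) = pp m := by
    funext n; rw [gg, pp, neg_neg, cpow_natCast]
  have hphi0 : phiF ω k (-(m:ℂ)) = 0 := by
    have : (fun n : ℕ => ω^(n+1) * (Δ_[1] ^[k] (gg (-(m:ℂ)))) n) = fun _ => 0 := by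
      funext n
      rw [hgg, fwdDiff_pp_zero (by omega : m < k)]
      simp
    rw [phiF, this]
    exact tsum_zero
  have hGm : G (-(m:ℂ)) = ∑ j ∈ range k, uu^(j+1) * Acoef m j := by
    rw [hG]
    simp only []
    rw [hphi0, mul_zero, zero_add]
    refine Finset.sum_congr rfl fun j _ => ?_
    rw [hgg]; rfl
  rw [hFm, hGm, hk]
  rw [Finset.sum_range_succ, Acoef_eq_zero (by omega : m < m + 1), mul_zero, add_zero]
  rw [negPolylog_eq_ratH m ω hω1, ratH]
end

section
/- For Re s > 1, Re a > 0, and ω on the unit circle with ω ≠ 1, the Mellin transform formula ∫₀^∞ Li₂(ω e^{−ax}; e^{−x}) x^{s−1} dx = Γ(s)·ζ_ω(s+1)·ζ(s,a) holds, where Li₂(z;q) = ∑_{n≥1} z^n/(n(1−q^n)) is the q-dilogarithm, ζ_ω(s) = ∑_{n≥1} ω^n/n^s is the Lerch zeta function, and ζ(s,a) = ∑_{n≥0} (a+n)^{−s} is the Hurwitz zeta function. -/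
open MeasureTheory Set Filter Complex Topology

/-- The q-dilogarithm `Li₂(z;q) = ∑_{n ≥ 1} zⁿ/(n(1−qⁿ))`. -/
noncomputable def qdilog (z q : ℂ) : ℂ :=
  ∑' n : ℕ, z ^ (n + 1) / (((n : ℂ) + 1) * (1 - q ^ (n + 1)))

/-- Real integrability of `t^(σ-1) * exp (-(c*t))` on `Ioi 0`. -/
lemma rIntAux {σ c : ℝ} (hσ : 0 < σ) (hc : 0 < c) :
    IntegrableOn (fun t : ℝ => t ^ (σ - 1) * Real.exp (-(c * t))) (Ioi 0) := by
  have h := Real.GammaIntegral_convergent hσ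
  rw [← mul_zero c, ← integrableOn_Ioi_comp_mul_left_iff _ _ hc] at h
  -- h : IntegrableOn (fun x => Real.exp (-(c*x)) * (c*x) ^ (σ - 1)) (Ioi 0)
  refine (IntegrableOn.congr_fun (h.const_mul (c ^ (1 - σ))) (fun t ht => ?_) measurableSet_Ioi)
  rw [mem_Ioi] at ht
  have hcc : c ^ (1 - σ) * c ^ (σ - 1) = 1 := by
    rw [← Real.rpow_add hc]; norm_num
  rw [Real.mul_rpow hc.le ht.le]
  calc c ^ (1 - σ) * (Real.exp (-(c * t)) * (c ^ (σ - 1) * t ^ (σ - 1)))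
      = (c ^ (1 - σ) * c ^ (σ - 1)) * (t ^ (σ - 1) * Real.exp (-(c * t))) := by ring
    _ = t ^ (σ - 1) * Real.exp (-(c * t)) := by rw [hcc, one_mul]

/-- Complex integrability of `t^(s-1) * exp (-(b*t))` on `Ioi 0` for `0 < re b`. -/
lemma cIntAux {s b : ℂ} (hs : 0 < s.re) (hb : 0 < b.re) :
    IntegrableOn (fun t : ℝ => (t : ℂ) ^ (s - 1) * Complex.exp (-(b * t))) (Ioi 0) := by
  refine Integrable.mono' (rIntAux hs hb) ?_ ?_
  · apply ContinuousOn.aestronglyMeasurable ?_ measurableSet_Ioi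
    refine ContinuousOn.mul ?_ ?_
    · apply continuousOn_of_forall_continuousAt
      intro x hx
      exact (continuousAt_cpow_const <| ofReal_mem_slitPlane.2 hx).comp
        continuous_ofReal.continuousAt
    · exact (Complex.continuous_exp.comp ((continuous_const.mul continuous_ofReal).neg)).continuousOn
  · rw [ae_restrict_iff' measurableSet_Ioi]
    filter_upwards with t ht
    rw [norm_mul,
      norm_cpow_eq_rpow_re_of_pos ht, Complex.norm_exp]
    simp only [sub_re, one_re, neg_re, mul_re, ofReal_re, ofReal_im, mul_zero, sub_zero]
    exact le_refl _

lemma measAux (s c : ℂ) :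
    AEStronglyMeasurable (fun t : ℝ => (t : ℂ) ^ (s - 1) * Complex.exp (-(c * t)))
      (volume.restrict (Ioi 0)) := by
  apply ContinuousOn.aestronglyMeasurable ?_ measurableSet_Ioi
  refine ContinuousOn.mul ?_ ?_
  · apply continuousOn_of_forall_continuousAt
    intro x hx
    exact (continuousAt_cpow_const <| ofReal_mem_slitPlane.2 hx).comp
      continuous_ofReal.continuousAt
  · exact (Complex.continuous_exp.comp ((continuous_const.mul continuous_ofReal).neg)).continuousOn

/-- Gamma integral with complex rate parameter, by analytic continuation from the real case. -/
lemma cGammaIntegral {s : ℂ} (hs : 0 < s.re) {b : ℂ} (hb : 0 < b.re) :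
    ∫ t : ℝ in Ioi 0, (t : ℂ) ^ (s - 1) * Complex.exp (-(b * t))
      = (1 / b) ^ s * Complex.Gamma s := by
  set f : ℂ → ℂ := fun b => ∫ t : ℝ in Ioi 0, (t : ℂ) ^ (s - 1) * Complex.exp (-(b * t)) with hf
  set g : ℂ → ℂ := fun b => (1 / b) ^ s * Complex.Gamma s with hg
  set U : Set ℂ := {z : ℂ | 0 < z.re} with hU
  have hUopen : IsOpen U := isOpen_lt continuous_const continuous_re
  have hdf : ∀ c ∈ U, DifferentiableAt ℂ f c := by
    intro c hc
    have hc' : 0 < c.re := hc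
    set ε : ℝ := c.re / 2 with hε
    have hε0 : 0 < ε := by positivity
    have key := hasDerivAt_integral_of_dominated_loc_of_deriv_le
      (μ := volume.restrict (Ioi 0)) (𝕜 := ℂ)
      (F := fun b (t : ℝ) => (t : ℂ) ^ (s - 1) * Complex.exp (-(b * t)))
      (F' := fun b (t : ℝ) => -(t : ℂ) * ((t : ℂ) ^ (s - 1) * Complex.exp (-(b * t))))
      (x₀ := c) (bound := fun t : ℝ => t ^ s.re * Real.exp (-(ε * t))) (Metric.ball_mem_nhds c hε0)
      (Filter.Eventually.of_forall fun x => measAux s x) (cIntAux hs hc') ?_ ?_ ?_ ?_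
    · exact key.2.differentiableAt
    · -- measurability of F' c
      apply AEStronglyMeasurable.mul ?_ (measAux s c)
      exact ((continuous_ofReal.neg).aestronglyMeasurable).restrict
    · -- bound
      rw [ae_restrict_iff' measurableSet_Ioi]
      filter_upwards with t ht
      intro x hx
      rw [mem_Ioi] at ht
      have hxre : ε ≤ x.re := by
        have h1 : |(x - c).re| ≤ ‖x - c‖ := Complex.abs_re_le_norm _
        rw [Complex.sub_re] at h1
        rw [Metric.mem_ball, Complex.dist_eq] at hx
        have := (abs_le.1 (h1.trans hx.le)).1
        simp only [hε] at this ⊢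
        linarith
      rw [norm_mul, norm_mul,
        norm_cpow_eq_rpow_re_of_pos ht, Complex.norm_exp, norm_neg, Complex.norm_of_nonneg ht.le]
      simp only [sub_re, one_re, neg_re, mul_re, ofReal_re, ofReal_im, mul_zero, sub_zero]
      have h2 : t * (t ^ (s.re - 1) * Real.exp (-(x.re * t))) = t ^ s.re * Real.exp (-(x.re * t)) := by
        rw [← mul_assoc, ← Real.rpow_one_add' ht.le
          (by intro h; rw [(by ring : 1 + (s.re - 1) = s.re)] at h; exact hs.ne' h)]
        rw [(by ring : 1 + (s.re - 1) = s.re)]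
      rw [h2]
      have h3 : Real.exp (-(x.re * t)) ≤ Real.exp (-(ε * t)) :=
        Real.exp_le_exp.2 (by nlinarith)
      exact mul_le_mul_of_nonneg_left h3 (Real.rpow_nonneg ht.le _)
    · -- integrability of bound
      have h := rIntAux (show (0:ℝ) < s.re + 1 by positivity) hε0
      simpa using h.integrable
    · -- derivative
      rw [ae_restrict_iff' measurableSet_Ioi]
      filter_upwards with t ht
      intro x hx
      have h1 : HasDerivAt (fun y : ℂ => -(y * t)) (-(t : ℂ)) x := by
        exact (hasDerivAt_mul_const (t : ℂ)).neg
      have h3 := (h1.cexp).const_mul ((t : ℂ) ^ (s - 1))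
      convert h3 using 1
      · rfl
      ring
  have hdg : ∀ c ∈ U, DifferentiableAt ℂ g c := by
    intro c hc
    have hc' : 0 < c.re := hc
    have hc0 : c ≠ 0 := by
      intro h; rw [h] at hc'; simp at hc'
    have hslit : (1 / c) ∈ Complex.slitPlane := by
      refine Complex.mem_slitPlane_iff.2 (Or.inl ?_)
      rw [one_div, Complex.inv_re]
      have := Complex.normSq_pos.2 hc0
      positivity
    exact (((differentiableAt_const (1:ℂ)).div differentiableAt_id hc0).cpow
      (differentiableAt_const s) hslit).mul_const _
  have hfa : AnalyticOnNhd ℂ f U :=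
    DifferentiableOn.analyticOnNhd (fun z hz => (hdf z hz).differentiableWithinAt) hUopen
  have hga : AnalyticOnNhd ℂ g U :=
    DifferentiableOn.analyticOnNhd (fun z hz => (hdg z hz).differentiableWithinAt) hUopen
  have hpre : IsPreconnected U := (convex_halfSpace_re_gt 0).isPreconnected
  have h1U : (1 : ℂ) ∈ U := by simp [hU]
  have hseq : Tendsto (fun n : ℕ => (1 : ℂ) + ((1 / (n + 1) : ℝ) : ℂ)) atTop (𝓝[≠] (1 : ℂ)) := by
    rw [tendsto_nhdsWithin_iff]
    constructor
    · have h0 : Tendsto (fun n : ℕ => (1 / (n + 1) : ℝ)) atTop (𝓝 0) :=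
        tendsto_one_div_add_atTop_nhds_zero_nat
      have h1 := (Complex.continuous_ofReal.tendsto 0).comp h0
      simpa using tendsto_const_nhds.add h1
    · filter_upwards with n
      have hpos : (0:ℝ) < 1 / (n + 1) := by positivity
      simp only [mem_compl_iff, mem_singleton_iff, ne_eq]
      intro h
      have : ((1 / (n + 1) : ℝ) : ℂ) = 0 := by linear_combination h
      rw [Complex.ofReal_eq_zero] at this
      linarith
  have hfreq : ∃ᶠ z in 𝓝[≠] (1 : ℂ), f z = g z := by
    refine hseq.frequently (Frequently.of_forall fun n => ?_)
    have hr : (0:ℝ) < 1 + 1 / (n + 1) := by positivity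
    have hcast : (1 : ℂ) + ((1 / (n + 1) : ℝ) : ℂ) = ((1 + 1 / (n + 1) : ℝ) : ℂ) := by
      push_cast; ring
    rw [hcast]
    simpa [hf, hg] using integral_cpow_mul_exp_neg_mul_Ioi hs hr
  exact hfa.eqOn_of_preconnected_of_frequently_eq hga hpre h1U hfreq hb

lemma hasSum_mellin_cplx {ι : Type*} [Countable ι] {a : ι → ℂ} {p : ι → ℂ} {F : ℝ → ℂ} {s : ℂ}
    (hp : ∀ i, 0 < (p i).re) (hs : 0 < s.re)
    (hF : ∀ t ∈ Ioi (0:ℝ), HasSum (fun i => a i * Complex.exp (-(p i * t))) (F t))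
    (h_sum : Summable fun i => ‖a i‖ / (p i).re ^ s.re) :
    HasSum (fun i => Complex.Gamma s * a i * (1 / p i) ^ s) (mellin F s) := by
  simp_rw [mellin, smul_eq_mul, ← setIntegral_congr_fun measurableSet_Ioi
    (fun t ht => congr_arg _ (hF t ht).tsum_eq), ← tsum_mul_left]
  have hnorm : ∀ (i : ι), ∀ t ∈ Ioi (0:ℝ),
      ‖(t:ℂ) ^ (s - 1) * (a i * Complex.exp (-(p i * t)))‖
        = ‖a i‖ * (t ^ (s.re - 1) * Real.exp (-((p i).re * t))) := by
    intro i t ht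
    rw [norm_mul, norm_mul,
      norm_cpow_eq_rpow_re_of_pos ht, Complex.norm_exp]
    simp only [sub_re, one_re, neg_re, mul_re, ofReal_re, ofReal_im, mul_zero, sub_zero]
    ring
  convert hasSum_integral_of_summable_integral_norm
    (F := fun i (t : ℝ) => (t : ℂ) ^ (s - 1) * (a i * Complex.exp (-(p i * t))))
    (fun i => ?_) ?_ using 2 with i
  · rfl
  · -- value of each integral
    simp_rw [show ∀ (i : ι) (t : ℝ), (t:ℂ) ^ (s - 1) * (a i * Complex.exp (-(p i * t)))
        = a i * ((t:ℂ) ^ (s - 1) * Complex.exp (-(p i * t))) from fun i t => by ring,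
      integral_const_mul, cGammaIntegral hs (hp i)]
    ring
  · -- integrability
    refine IntegrableOn.congr_fun ((cIntAux hs (hp i)).const_mul (a i))
      (fun t _ => by ring) measurableSet_Ioi
  · -- summability of norms of integrals
    refine ((h_sum.mul_left (Real.Gamma s.re)).congr (fun i => ?_))
    rw [setIntegral_congr_fun measurableSet_Ioi (hnorm i), integral_const_mul,
      Real.integral_rpow_mul_exp_neg_mul_Ioi hs (hp i), one_div,
      Real.inv_rpow (hp i).le, div_eq_mul_inv]
    ring

lemma ofReal_mul_cpow {r : ℝ} (hr : 0 < r) {w : ℂ} (hw : w ≠ 0) (s : ℂ) :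
    ((r : ℂ) * w) ^ s = (r : ℂ) ^ s * w ^ s := by
  have hr' : (r : ℂ) ≠ 0 := ofReal_ne_zero.2 hr.ne'
  rw [cpow_def_of_ne_zero (mul_ne_zero hr' hw), cpow_def_of_ne_zero hr', cpow_def_of_ne_zero hw,
    Complex.log_ofReal_mul hr hw, add_mul, Complex.exp_add, Complex.ofReal_log hr.le]

/-- Mellin transform formula: for `Re s > 1`, `Re a > 0`, `|ω| = 1`, `ω ≠ 1`,
`∫₀^∞ Li₂(ω e^{−ax}; e^{−x}) x^{s−1} dx = Γ(s)·ζ_ω(s+1)·ζ(s,a)`,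
with the Lerch zeta `ζ_ω(s+1) = ∑_{n ≥ 1} ωⁿ/n^{s+1}` and Hurwitz zeta
`ζ(s,a) = ∑_{n ≥ 0} (a+n)^{−s}`. -/
theorem stmt12 (s a ω : ℂ) (hs : 1 < s.re) (ha : 0 < a.re)
    (hω : ‖ω‖ = 1) (hω1 : ω ≠ 1) :
    ∫ x in Set.Ioi (0 : ℝ),
        qdilog (ω * Complex.exp (-(a * (x : ℂ)))) (Complex.exp (-(x : ℂ))) * (x : ℂ) ^ (s - 1)
      = Complex.Gamma s * (∑' n : ℕ, ω ^ (n + 1) / ((n : ℂ) + 1) ^ (s + 1)) *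
          (∑' n : ℕ, (a + (n : ℂ)) ^ (-s)) := by
  have hs' : 0 < s.re := by linarith
  set F : ℝ → ℂ := fun x => qdilog (ω * Complex.exp (-(a * (x : ℂ)))) (Complex.exp (-(x : ℂ)))
    with hFdef
  set aa : ℕ × ℕ → ℂ := fun q => ω ^ (q.1 + 1) / ((q.1 : ℂ) + 1) with haa
  set pp : ℕ × ℕ → ℂ := fun q => ((q.1 : ℂ) + 1) * (a + (q.2 : ℂ)) with hpp
  have hcast : ∀ n : ℕ, ((n : ℂ) + 1) = (((n : ℝ) + 1 : ℝ) : ℂ) := by intro n; push_cast; ring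
  have hNpos : ∀ n : ℕ, (0:ℝ) < (n : ℝ) + 1 := fun n => by positivity
  have hcre : ∀ m : ℕ, (0:ℝ) < (a + (m : ℂ)).re := by
    intro m; simp only [add_re, natCast_re]; positivity
  have hppre : ∀ q : ℕ × ℕ, (pp q).re = ((q.1 : ℝ) + 1) * (a.re + q.2) := by
    intro q
    rw [hpp]; simp only []
    rw [hcast q.1, Complex.re_ofReal_mul]
    simp [add_re, natCast_re]
  have hp : ∀ q : ℕ × ℕ, 0 < (pp q).re := by
    intro q; rw [hppre q]; have := hNpos q.1; positivity
  have haan : ∀ q : ℕ × ℕ, ‖aa q‖ = 1 / ((q.1 : ℝ) + 1) := by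
    intro q
    rw [haa]; simp only []
    rw [norm_div, norm_pow, hω, one_pow, hcast q.1, Complex.norm_real,
      Real.norm_eq_abs, _root_.abs_of_pos (hNpos q.1)]
  -- pointwise expansion
  have hF : ∀ t ∈ Ioi (0:ℝ), HasSum (fun q : ℕ × ℕ => aa q * Complex.exp (-(pp q * t))) (F t) := by
    intro t ht
    rw [mem_Ioi] at ht
    set z : ℂ := ω * Complex.exp (-(a * t)) with hz
    set Q : ℂ := Complex.exp (-(t : ℂ)) with hQ
    have hQlt : ‖Q‖ < 1 := by
      rw [hQ, Complex.norm_exp]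
      simp only [neg_re, ofReal_re]
      rw [Real.exp_lt_one_iff]; linarith
    have hterm2 : ∀ q : ℕ × ℕ, aa q * Complex.exp (-(pp q * t))
        = z ^ (q.1 + 1) / ((q.1 : ℂ) + 1) * (Q ^ (q.1 + 1)) ^ q.2 := by
      rintro ⟨n, m⟩
      have hz1 : z ^ (n + 1) = ω ^ (n + 1) * Complex.exp (-(((n : ℂ) + 1) * a * t)) := by
        rw [hz, mul_pow, ← Complex.exp_nat_mul]
        congr 2
        push_cast; ring
      have hQ1 : (Q ^ (n + 1)) ^ m = Complex.exp (-(((n : ℂ) + 1) * (m : ℂ) * t)) := by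
        rw [hQ, ← pow_mul, ← Complex.exp_nat_mul]
        congr 1
        push_cast; ring
      have hsplit : -(pp (n, m) * t)
          = -(((n : ℂ) + 1) * a * t) + -(((n : ℂ) + 1) * (m : ℂ) * t) := by
        rw [hpp]; push_cast; ring
      rw [hsplit, Complex.exp_add, hz1, hQ1, haa]
      simp only []
      ring
    have hQn : ∀ n : ℕ, ‖Q ^ (n + 1)‖ < 1 := by
      intro n
      rw [norm_pow]
      exact pow_lt_one₀ (norm_nonneg _) hQlt (Nat.succ_ne_zero n)
    have hfib : ∀ n : ℕ, HasSum (fun m : ℕ => aa (n, m) * Complex.exp (-(pp (n, m) * t)))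
        (z ^ (n + 1) / (((n : ℂ) + 1) * (1 - Q ^ (n + 1)))) := by
      intro n
      have geo := (hasSum_geometric_of_norm_lt_one (hQn n)).mul_left
        (z ^ (n + 1) / ((n : ℂ) + 1))
      have hval : z ^ (n + 1) / ((n : ℂ) + 1) * (1 - Q ^ (n + 1))⁻¹
          = z ^ (n + 1) / (((n : ℂ) + 1) * (1 - Q ^ (n + 1))) := by
        rw [← div_eq_mul_inv, div_div]
      rw [hval] at geo
      exact geo.congr_fun fun m => hterm2 (n, m)
    -- summability over the product
    have hbd : Summable (fun q : ℕ × ℕ =>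
        Real.exp (-(a.re * t)) ^ (q.1 + 1) * Real.exp (-t) ^ q.2) := by
      have h1 : Real.exp (-(a.re * t)) < 1 := by rw [Real.exp_lt_one_iff]; nlinarith
      have h2 : Real.exp (-t) < 1 := by rw [Real.exp_lt_one_iff]; linarith
      have hu : Summable fun n : ℕ => Real.exp (-(a.re * t)) ^ (n + 1) :=
        ((summable_geometric_of_lt_one (Real.exp_nonneg _) h1).mul_right _).congr
          fun n => (pow_succ _ n).symm
      have hv : Summable fun m : ℕ => Real.exp (-t) ^ m :=
        summable_geometric_of_lt_one (Real.exp_nonneg _) h2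
      exact hu.mul_of_nonneg hv (fun n => by positivity) (fun m => by positivity)
    have hsf : Summable (fun q : ℕ × ℕ => aa q * Complex.exp (-(pp q * t))) := by
      refine Summable.of_norm_bounded hbd fun q => ?_
      rw [norm_mul, haan q, Complex.norm_exp]
      have hre : (-(pp q * (t : ℂ))).re = -((pp q).re * t) := by
        simp [Complex.neg_re, Complex.mul_re, Complex.ofReal_re, Complex.ofReal_im]
      rw [hre, hppre q, ← Real.exp_nat_mul, ← Real.exp_nat_mul, ← Real.exp_add]
      have hb1 : (1 : ℝ) / ((q.1 : ℝ) + 1) ≤ 1 := by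
        rw [div_le_one (hNpos q.1)]; linarith [Nat.cast_nonneg (α := ℝ) q.1]
      have hb2 : Real.exp (-(((q.1 : ℝ) + 1) * (a.re + (q.2 : ℝ)) * t))
          ≤ Real.exp ((↑(q.1 + 1) : ℝ) * -(a.re * t) + (q.2 : ℝ) * -t) := by
        rw [Real.exp_le_exp]
        push_cast
        nlinarith [mul_nonneg (mul_nonneg (Nat.cast_nonneg (α := ℝ) q.1)
          (Nat.cast_nonneg (α := ℝ) q.2)) ht.le]
      calc 1 / ((q.1 : ℝ) + 1) * Real.exp (-(((q.1 : ℝ) + 1) * (a.re + ↑q.2) * t))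
          ≤ 1 * Real.exp ((↑(q.1 + 1) : ℝ) * -(a.re * t) + (q.2 : ℝ) * -t) :=
            mul_le_mul hb1 hb2 (Real.exp_nonneg _) zero_le_one
        _ = Real.exp ((↑(q.1 + 1) : ℝ) * -(a.re * t) + (q.2 : ℝ) * -t) := one_mul _
    have hts : ∑' q : ℕ × ℕ, (aa q * Complex.exp (-(pp q * t))) = F t := by
      rw [Summable.tsum_prod' hsf hsf.prod_factor]
      calc ∑' n : ℕ, ∑' m : ℕ, (aa (n, m) * Complex.exp (-(pp (n, m) * t)))
          = ∑' n : ℕ, z ^ (n + 1) / (((n : ℂ) + 1) * (1 - Q ^ (n + 1))) :=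
            tsum_congr fun n => (hfib n).tsum_eq
        _ = F t := rfl
    exact hts ▸ hsf.hasSum
  -- summability for the Mellin machine
  have h_sum : Summable fun q : ℕ × ℕ => ‖aa q‖ / (pp q).re ^ s.re := by
    have key : ∀ q : ℕ × ℕ, ‖aa q‖ / (pp q).re ^ s.re
        = (1 / ((q.1 : ℝ) + 1) ^ (s.re + 1)) * (1 / (a.re + (q.2 : ℝ)) ^ s.re) := by
      intro q
      have hA : (0:ℝ) < a.re + (q.2 : ℝ) := by positivity
      rw [haan q, hppre q, Real.mul_rpow (hNpos q.1).le hA.le,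
        Real.rpow_add (hNpos q.1), Real.rpow_one]
      rw [div_eq_mul_inv, div_eq_mul_inv, div_eq_mul_inv, mul_inv, mul_inv]
      ring
    have hu : Summable fun n : ℕ => 1 / ((n : ℝ) + 1) ^ (s.re + 1) := by
      have h1 := (Real.summable_one_div_nat_add_rpow 1 (s.re + 1)).2 (by linarith)
      refine h1.congr fun n => ?_
      rw [_root_.abs_of_pos (by positivity : (0:ℝ) < (n:ℝ) + 1)]
    have hv : Summable fun m : ℕ => 1 / (a.re + (m : ℝ)) ^ s.re := by
      have h1 := (Real.summable_one_div_nat_add_rpow a.re s.re).2 hs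
      refine h1.congr fun m => ?_
      rw [_root_.abs_of_pos (by positivity : (0:ℝ) < (m:ℝ) + a.re), add_comm (m:ℝ) a.re]
    exact ((hu.mul_of_nonneg hv (fun n => by positivity) (fun m => by positivity)).congr
      fun q => (key q).symm)
  have hmain := hasSum_mellin_cplx hp hs' hF h_sum
  -- identify terms
  have hterm : ∀ q : ℕ × ℕ, Complex.Gamma s * aa q * (1 / pp q) ^ s
      = Complex.Gamma s * ((ω ^ (q.1 + 1) / ((q.1 : ℂ) + 1) ^ (s + 1)) * (a + (q.2 : ℂ)) ^ (-s)) := by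
    rintro ⟨n, m⟩
    set N : ℝ := (n : ℝ) + 1 with hNdef
    have hN : (0:ℝ) < N := hNpos n
    have hNC : ((n : ℂ) + 1) = ((N : ℝ) : ℂ) := hcast n
    set c : ℂ := a + (m : ℂ) with hc
    have hcre' : 0 < c.re := hcre m
    have hc0 : c ≠ 0 := by
      intro h; rw [h] at hcre'; simp at hcre'
    have hcarg : c.arg ≠ Real.pi := by
      intro h
      rw [Complex.arg_eq_pi_iff] at h
      linarith [h.1]
    have hppq : pp (n, m) = ((N : ℝ) : ℂ) * c := by
      rw [hpp]; simp only []; rw [hNC]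
    have h2 : (1 / pp (n, m)) ^ s = ((N⁻¹ : ℝ) : ℂ) ^ s * (c⁻¹) ^ s := by
      rw [hppq, one_div, mul_inv, ← ofReal_inv]
      exact ofReal_mul_cpow (by positivity) (inv_ne_zero hc0) s
    have h3 : ((N⁻¹ : ℝ) : ℂ) ^ s = (((N : ℝ) : ℂ) ^ s)⁻¹ := by
      rw [ofReal_inv]
      exact inv_cpow _ _ (by
        rw [Complex.arg_ofReal_of_nonneg hN.le]; exact Ne.symm Real.pi_ne_zero)
    have h4 : (c⁻¹) ^ s = (c ^ s)⁻¹ := inv_cpow _ _ hcarg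
    have h5 : ((N : ℝ) : ℂ) ^ (s + 1) = ((N : ℝ) : ℂ) ^ s * ((N : ℝ) : ℂ) := by
      rw [cpow_add _ _ (ofReal_ne_zero.2 hN.ne'), cpow_one]
    have h6 : c ^ (-s) = (c ^ s)⁻¹ := cpow_neg c s
    rw [h2, h3, h4, haa]
    simp only []
    rw [hNC, h5, h6]
    ring
  rw [funext hterm] at hmain
  have hmell : mellin F s = ∫ x in Set.Ioi (0:ℝ), F x * (x : ℂ) ^ (s - 1) := by
    simp_rw [mellin, smul_eq_mul, mul_comm]
  have := hmain.tsum_eq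
  rw [hmell] at this
  rw [← this, Summable.tsum_prod' hmain.summable hmain.summable.prod_factor]
  calc ∑' (n : ℕ), ∑' (m : ℕ), Complex.Gamma s * (ω ^ (n + 1) / ((n : ℂ) + 1) ^ (s + 1)
          * (a + (m : ℂ)) ^ (-s))
      = ∑' (n : ℕ), (Complex.Gamma s * (ω ^ (n + 1) / ((n : ℂ) + 1) ^ (s + 1)))
          * ∑' (m : ℕ), (a + (m : ℂ)) ^ (-s) := by
        refine tsum_congr fun n => ?_
        rw [← tsum_mul_left]
        exact tsum_congr fun m => by ring
    _ = Complex.Gamma s * (∑' n : ℕ, ω ^ (n + 1) / ((n : ℂ) + 1) ^ (s + 1)) *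
          (∑' n : ℕ, (a + (n : ℂ)) ^ (-s)) := by
        rw [tsum_mul_right, tsum_mul_left]
end

section
/- Let T = [[1, −1], [0, 1]] and for W ∈ ℂ let H_W = [[e^{W/2}, 0], [0, e^{−W/2}]]. Suppose W + W' + W'' = 0 and that z := e^{W}·(−1)^{δ}, z'' := e^{W''}·(−1)^{δ''} satisfy z'' = (z−1)/z, where δ = δ'' = 1. Then H_{W''}·T·H_{W'}·T·H_W·T = I, the identity matrix. -/
/-- The matrix `T = [[1, −1], [0, 1]]`. -/
noncomputable def Tmat : Matrix (Fin 2) (Fin 2) ℂ := !![1, -1; 0, 1]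

/-- The matrix `H_W = [[e^{W/2}, 0], [0, e^{−W/2}]]`. -/
noncomputable def Hmat (W : ℂ) : Matrix (Fin 2) (Fin 2) ℂ :=
  !![Complex.exp (W / 2), 0; 0, Complex.exp (-(W / 2))]

/-- SL(2,ℂ) cocycle condition around a boundary hexagon in the all-odd-parity case:
if `W + W' + W'' = 0` and `z = e^W·(−1)^δ`, `z'' = e^{W''}·(−1)^{δ''}` with `δ = δ'' = 1`
satisfy `z'' = (z−1)/z`, then `H_{W''}·T·H_{W'}·T·H_W·T = I`. -/
theorem stmt16 (W W' W'' z z'' : ℂ)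
    (hsum : W + W' + W'' = 0)
    (hz : z = Complex.exp W * (-1 : ℂ) ^ (1 : ℕ))
    (hz'' : z'' = Complex.exp W'' * (-1 : ℂ) ^ (1 : ℕ))
    (hrel : z'' = (z - 1) / z) :
    Hmat W'' * Tmat * Hmat W' * Tmat * Hmat W * Tmat = 1 := by
  have hW' : W' = -W - W'' := by linear_combination hsum
  subst hW'
  subst hz; subst hz''
  have hkey : Complex.exp W'' * Complex.exp W + Complex.exp W + 1 = 0 := by
    have h0 : Complex.exp W ≠ 0 := Complex.exp_ne_zero W
    field_simp at hrel
    linear_combination -hrel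
  set a := Complex.exp (W/2) with ha
  set c := Complex.exp (W''/2) with hc
  have hWn : a ≠ 0 := Complex.exp_ne_zero _
  have hW''n : c ≠ 0 := Complex.exp_ne_zero _
  have hE : Complex.exp W = a * a := by
    rw [ha, ← Complex.exp_add]; ring_nf
  have hE'' : Complex.exp W'' = c * c := by
    rw [hc, ← Complex.exp_add]; ring_nf
  have hd : Complex.exp ((-W - W'')/2) = (a * c)⁻¹ := by
    rw [ha, hc, ← Complex.exp_add, ← Complex.exp_neg]; ring_nf
  have ha2 : Complex.exp (W * (1/2 : ℂ)) = a := by rw [ha]; ring_nf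
  have hc2 : Complex.exp (W'' * (1/2 : ℂ)) = c := by rw [hc]; ring_nf
  rw [hE, hE''] at hkey
  simp only [Hmat, Tmat]
  ext i j
  fin_cases i <;> fin_cases j <;>
    simp [Matrix.mul_apply, Fin.sum_univ_two, Matrix.one_apply, Complex.exp_neg,
      neg_div, Complex.exp_sub, Complex.exp_add, hd, hE, hE'', ha2, hc2] <;>
    field_simp <;>
    first
      | linear_combination c * hkey
      | linear_combination (a * c) * hkey
      | linear_combination (a^2 * c) * hkey
      | linear_combination -c * hkey
      | linear_combination (c / a) * hkey
      | linear_combination -hkey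
      | ring
end

section
/- Let ω, ω', ω'' be complex numbers of modulus 1, none real, with ω·ω'·ω'' = −1, and define z = |Im ω' / Im ω''|·ω, z' = |Im ω'' / Im ω|·ω', z'' = |Im ω / Im ω'|·ω''. If z' = 1/(1−z) and z'' = (z−1)/z, then the imaginary parts of ω, ω', ω'' all have the same sign. Conversely, if Im ω, Im ω', Im ω'' are all positive, writing ω = e^{iα}, ω' = e^{iα'}, ω'' = e^{iα''} with α, α', α'' ∈ (0,π) and α + α' + α'' = π, the numbers z, z', z'' defined above satisfy z' = 1/(1−z) and z'' = (z−1)/z. -/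
noncomputable def shp (u v w : ℂ) : ℂ := ((|v.im / w.im| : ℝ) : ℂ) * u

private lemma conj_rel (ω ω' ω'' : ℂ)
    (habs : ‖ω‖ = 1) (habs' : ‖ω'‖ = 1)
    (hprod : ω * ω' * ω'' = -1) :
    ω'' = -(starRingEnd ℂ ω * starRingEnd ℂ ω') := by
  have h2 : ω * starRingEnd ℂ ω = 1 := by
    rw [Complex.mul_conj, Complex.normSq_eq_norm_sq, habs]; norm_num
  have h2' : ω' * starRingEnd ℂ ω' = 1 := by
    rw [Complex.mul_conj, Complex.normSq_eq_norm_sq, habs']; norm_num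
  have hω0 : ω ≠ 0 := by intro h; simp [h] at habs
  have hω'0 : ω' ≠ 0 := by intro h; simp [h] at habs'
  apply mul_left_cancel₀ (mul_ne_zero hω0 hω'0)
  rw [hprod]
  have : ω * ω' * -(starRingEnd ℂ ω * starRingEnd ℂ ω')
      = -((ω * starRingEnd ℂ ω) * (ω' * starRingEnd ℂ ω')) := by ring
  rw [this, h2, h2']; norm_num

private lemma one_sub_ne (x : ℝ) (hx : x ≠ 0) (ω : ℂ) (him : ω.im ≠ 0) :
    1 - (x:ℂ)*ω ≠ 0 := by
  intro h
  have := congrArg Complex.im h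
  simp [Complex.sub_im, Complex.mul_im] at this
  tauto

/-- Let `ω, ω', ω''` be non-real unit complex numbers with `ω·ω'·ω'' = −1`, and let
`z = |Im ω'/Im ω''|·ω`, `z' = |Im ω''/Im ω|·ω'`, `z'' = |Im ω/Im ω'|·ω''`.
If `z' = 1/(1−z)` and `z'' = (z−1)/z`, then `Im ω, Im ω', Im ω''` all have the same strict
sign; conversely, if they are all positive then the cross-ratio relations hold. -/
theorem stmt19 (ω ω' ω'' : ℂ)
    (habs : ‖ω‖ = 1) (habs' : ‖ω'‖ = 1) (habs'' : ‖ω''‖ = 1)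
    (him : ω.im ≠ 0) (him' : ω'.im ≠ 0) (him'' : ω''.im ≠ 0)
    (hprod : ω * ω' * ω'' = -1) :
    ((shp ω' ω'' ω = 1 / (1 - shp ω ω' ω'') ∧
        shp ω'' ω ω' = (shp ω ω' ω'' - 1) / shp ω ω' ω'') →
      ((0 < ω.im ∧ 0 < ω'.im ∧ 0 < ω''.im) ∨ (ω.im < 0 ∧ ω'.im < 0 ∧ ω''.im < 0))) ∧
    ((0 < ω.im ∧ 0 < ω'.im ∧ 0 < ω''.im) →
      (shp ω' ω'' ω = 1 / (1 - shp ω ω' ω'') ∧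
        shp ω'' ω ω' = (shp ω ω' ω'' - 1) / shp ω ω' ω'')) := by
  have hω0 : ω ≠ 0 := by intro h; simp [h] at habs
  have hω'0 : ω' ≠ 0 := by intro h; simp [h] at habs'
  have h2 : ω * starRingEnd ℂ ω = 1 := by
    rw [Complex.mul_conj, Complex.normSq_eq_norm_sq, habs]; norm_num
  have h2' : ω' * starRingEnd ℂ ω' = 1 := by
    rw [Complex.mul_conj, Complex.normSq_eq_norm_sq, habs']; norm_num
  have hr1 : ω'' = -(starRingEnd ℂ ω * starRingEnd ℂ ω') := conj_rel ω ω' ω'' habs habs' hprod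
  have hprod2 : ω * ω'' * ω' = -1 := by rw [← hprod]; ring
  have hr2 : ω' = -(starRingEnd ℂ ω * starRingEnd ℂ ω'') := conj_rel ω ω'' ω' habs habs'' hprod2
  have hc : ω''.im = ω.re * ω'.im + ω.im * ω'.re := by
    rw [hr1]; simp [Complex.mul_im]; ring
  have hb : ω'.im = ω.re * ω''.im + ω.im * ω''.re := by
    rw [hr2]; simp [Complex.mul_im]; ring
  have hbc0 : |ω'.im / ω''.im| ≠ 0 := by positivity
  have hca0 : |ω''.im / ω.im| ≠ 0 := by positivity
  have hab0 : |ω.im / ω'.im| ≠ 0 := by positivity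
  constructor
  · rintro ⟨h1, h2x⟩
    rw [shp, shp] at h1
    rw [shp, shp] at h2x
    have hd1 : (1 : ℂ) - (|ω'.im/ω''.im| : ℝ) * ω ≠ 0 := one_sub_ne _ hbc0 ω him
    have e1 : ((|ω''.im/ω.im| : ℝ) : ℂ) * ω' * (1 - (|ω'.im/ω''.im| : ℝ) * ω) = 1 := by
      rw [h1]; field_simp
    have e1' := congrArg Complex.im e1
    simp [Complex.mul_im, Complex.sub_im, Complex.sub_re, Complex.mul_re] at e1'
    have e1im : |ω''.im/ω.im| * (ω'.im - |ω'.im/ω''.im| * ω''.im) = 0 := by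
      linear_combination e1' - |ω''.im/ω.im| * |ω'.im/ω''.im| * hc
    have hbc : ω'.im = |ω'.im/ω''.im| * ω''.im := by
      rcases mul_eq_zero.mp e1im with h | h
      · exact absurd h hca0
      · linarith
    have hbcpos : 0 < ω'.im * ω''.im := by
      have hq : ω'.im * ω''.im = |ω'.im/ω''.im| * ω''.im ^ 2 := by
        linear_combination ω''.im * hbc
      have h3 : (0:ℝ) < |ω'.im/ω''.im| := lt_of_le_of_ne (abs_nonneg _) (Ne.symm hbc0)
      have hc2 : (0:ℝ) < ω''.im ^ 2 := by positivity
      nlinarith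
    have hz0 : ((|ω'.im/ω''.im| : ℝ) : ℂ) * ω ≠ 0 := by
      apply mul_ne_zero _ hω0
      simpa using hbc0
    have e2 : ((|ω.im/ω'.im| : ℝ) : ℂ) * ω'' * ((|ω'.im/ω''.im| : ℝ) * ω)
        = (|ω'.im/ω''.im| : ℝ) * ω - 1 := by
      rw [h2x]; field_simp
      exact mul_div_cancel_left₀ _ (by simpa using hbc0)
    have e2' := congrArg Complex.im e2
    simp [Complex.mul_im, Complex.sub_im, Complex.mul_re] at e2'
    have e2im : |ω.im/ω'.im| * |ω'.im/ω''.im| * ω'.im = |ω'.im/ω''.im| * ω.im := by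
      linear_combination e2' + |ω.im/ω'.im| * |ω'.im/ω''.im| * hb
    have hab : |ω.im/ω'.im| * ω'.im = ω.im := by
      have hz : |ω'.im/ω''.im| * (|ω.im/ω'.im| * ω'.im - ω.im) = 0 := by
        linear_combination e2im
      rcases mul_eq_zero.mp hz with h | h
      · exact absurd h hbc0
      · linarith
    have habpos : 0 < ω.im * ω'.im := by
      have hq : ω.im * ω'.im = |ω.im/ω'.im| * ω'.im ^ 2 := by
        linear_combination (-ω'.im) * hab
      have h3 : (0:ℝ) < |ω.im/ω'.im| := lt_of_le_of_ne (abs_nonneg _) (Ne.symm hab0)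
      have hb2 : (0:ℝ) < ω'.im ^ 2 := by positivity
      nlinarith
    rcases lt_or_gt_of_ne him with hneg | hpos
    · right
      refine ⟨hneg, ?_, ?_⟩ <;> nlinarith
    · left
      refine ⟨hpos, ?_, ?_⟩ <;> nlinarith
  · rintro ⟨hA, hB, hC⟩
    have hab : |ω'.im / ω''.im| = ω'.im / ω''.im := abs_of_pos (div_pos hB hC)
    have hca : |ω''.im / ω.im| = ω''.im / ω.im := abs_of_pos (div_pos hC hA)
    have habb : |ω.im / ω'.im| = ω.im / ω'.im := abs_of_pos (div_pos hA hB)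
    have ha0 : ((ω.im:ℝ):ℂ) ≠ 0 := Complex.ofReal_ne_zero.mpr him
    have hb0 : ((ω'.im:ℝ):ℂ) ≠ 0 := Complex.ofReal_ne_zero.mpr him'
    have hc0 : ((ω''.im:ℝ):ℂ) ≠ 0 := Complex.ofReal_ne_zero.mpr him''
    have key1 : ((ω''.im:ℝ):ℂ) - (ω'.im:ℝ) * ω = (ω.im:ℝ) * starRingEnd ℂ ω' := by
      apply Complex.ext
      · simp [Complex.sub_re, Complex.mul_re, Complex.mul_im]
        linarith [hc]
      · simp [Complex.sub_im, Complex.mul_im, Complex.mul_re]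
        ring
    have key2 : ((ω'.im:ℝ):ℂ) - (ω''.im:ℝ) * starRingEnd ℂ ω = (ω.im:ℝ) * ω'' := by
      apply Complex.ext
      · simp [Complex.sub_re, Complex.mul_re, Complex.mul_im]
        linarith [hb]
      · simp [Complex.sub_im, Complex.mul_im, Complex.mul_re]
        ring
    have hd1 : (1 : ℂ) - (|ω'.im/ω''.im| : ℝ) * ω ≠ 0 := one_sub_ne _ hbc0 ω him
    constructor
    · rw [shp, shp, hab, hca, eq_div_iff (by rw [← hab]; exact hd1)]
      push_cast
      field_simp
      linear_combination ω' * key1 + ((ω.im:ℝ):ℂ) * h2'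
    · rw [shp, shp, hab, habb]
      have hz0 : ((ω'.im/ω''.im : ℝ) : ℂ) * ω ≠ 0 := by
        apply mul_ne_zero _ hω0
        push_cast
        exact div_ne_zero hb0 hc0
      rw [eq_div_iff hz0]
      push_cast
      field_simp
      linear_combination (-ω) * key2 - ((ω''.im:ℝ):ℂ) * h2
end
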